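/- Define a(λ) by a(∅) = 1 and a(λ₁,…,λ_r) = a(λ₁,…,λ_{r−1}) + λ_r·a(λ₁−1,…,λ_r−1). Then for any r ≥ 0, k ≥ 1, m ≥ q ≥ 1 and a tail α₁ ≥ … ≥ α_r with q > α₁ ≥ 1, one has (m−q+1)·a(m, q^{k−1}, q, α₁,…,α_r) ≤ k·a(m+1, q^{k−1}, q−1, α₁,…,α_r). -/

import Mathlib

def colErase (l : List ℕ) : List ℕ := (l.map (· - 1)).filter (· ≠ 0)

def IsPartition (l : List ℕ) : Prop := l.Pairwise (· ≥ ·) ∧ ∀ x ∈ l, 0 < x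

namespace Aux18

def Pt (m q k : ℕ) (β : List ℕ) : List ℕ := m :: (List.replicate k q ++ β)

lemma colErase_append (l₁ l₂ : List ℕ) : colErase (l₁ ++ l₂) = colErase l₁ ++ colErase l₂ := by
  simp [colErase]

lemma colErase_cons (x : ℕ) (l : List ℕ) :
    colErase (x :: l) = (if x - 1 = 0 then [] else [x-1]) ++ colErase l := by
  simp only [colErase, List.map_cons, List.filter_cons]
  split
  · next h => simp_all [List.filter]
  · next h => simp_all

lemma colErase_nil : colErase [] = [] := rfl

lemma colErase_single (t : ℕ) : colErase [t] = if t - 1 = 0 then [] else [t-1] := by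
  rw [colErase_cons, colErase_nil, List.append_nil]

lemma CE_P {m q : ℕ} (hm : 2 ≤ m) (hq : 2 ≤ q) (k : ℕ) (β : List ℕ) :
    colErase (Pt m q k β) = Pt (m-1) (q-1) k (colErase β) := by
  simp only [Pt, colErase, List.map_cons, List.map_append, List.map_replicate,
    List.filter_cons, List.filter_append, List.filter_replicate]
  have h1 : (m - 1 ≠ 0) := by omega
  have h2 : (q - 1 ≠ 0) := by omega
  simp [h1, h2]

lemma CE_P1 {m : ℕ} (k : ℕ) : colErase (Pt m 1 k []) = if m - 1 = 0 then [] else [m-1] := by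
  simp only [Pt, colErase, List.map_cons, List.map_append, List.map_replicate,
    List.filter_cons, List.filter_append, List.filter_replicate, List.map_nil, List.filter_nil]
  split
  · next h => simp_all
  · next h => simp_all

lemma colErase_sum_le (l : List ℕ) : (colErase l).sum ≤ l.sum := by
  induction l with
  | nil => simp [colErase_nil]
  | cons x l ih =>
    rw [colErase_cons]
    split <;> simp <;> omega

lemma colErase_sum_lt {l : List ℕ} (h : l ≠ []) (hp : ∀ x ∈ l, 0 < x) :
    (colErase l).sum < l.sum := by
  cases l with
  | nil => simp at h
  | cons x l =>
    have hx : 0 < x := hp x (by simp)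
    rw [colErase_cons]
    have := colErase_sum_le l
    split <;> simp <;> omega

lemma sorted_cons_tail {x : ℕ} {α : List ℕ} (h : α.Pairwise (· ≥ ·)) (hx : ∀ y ∈ α, y ≤ x) :
    (x :: α).Pairwise (· ≥ ·) := List.pairwise_cons.mpr ⟨hx, h⟩

lemma sorted_rep_app {q : ℕ} {β : List ℕ} (hs : β.Pairwise (· ≥ ·)) (hb : ∀ x ∈ β, x ≤ q) :
    ∀ k, (List.replicate k q ++ β).Pairwise (· ≥ ·) := by
  intro k
  induction k with
  | zero => simpa
  | succ k ih =>
    rw [List.replicate_succ, List.cons_append]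
    refine sorted_cons_tail ih ?_
    intro y hy
    rcases List.mem_append.1 hy with h | h
    · simp [List.eq_of_mem_replicate h]
    · exact hb y h

lemma isPartition_P {m q k : ℕ} {β : List ℕ} (h1 : 1 ≤ q) (h2 : q ≤ m)
    (hs : β.Pairwise (· ≥ ·)) (hp : ∀ x ∈ β, 0 < x) (hb : ∀ x ∈ β, x ≤ q) :
    IsPartition (Pt m q k β) := by
  constructor
  · refine sorted_cons_tail (sorted_rep_app hs hb k) ?_
    intro y hy
    rcases List.mem_append.1 hy with h | h
    · simp [List.eq_of_mem_replicate h, h2]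
    · exact le_trans (hb y h) h2
  · intro x hx
    rcases List.mem_cons.1 hx with rfl | hx
    · omega
    · rcases List.mem_append.1 hx with h | h
      · have := List.eq_of_mem_replicate h; omega
      · exact hp x h

lemma isPartition_colErase {l : List ℕ} (h : IsPartition l) : IsPartition (colErase l) := by
  obtain ⟨hs, _⟩ := h
  constructor
  · apply List.Pairwise.sublist List.filter_sublist
    exact (List.pairwise_map.2 (hs.imp (fun h => Nat.sub_le_sub_right h 1)))
  · intro x hx
    have := List.of_mem_filter hx
    simp at this
    omega

lemma isPartition_dropLast {l : List ℕ} (h : IsPartition l) : IsPartition l.dropLast := by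
  obtain ⟨hs, hp⟩ := h
  exact ⟨List.Pairwise.sublist (List.dropLast_sublist l) hs,
    fun x hx => hp x (List.mem_of_mem_dropLast hx)⟩

section WithA
variable {a : List ℕ → ℤ} (h0 : a [] = 1)
  (hrec : ∀ l : List ℕ, IsPartition l → l ≠ [] →
      a l = a l.dropLast + (l.getLastD 0 : ℤ) * a (colErase l))

include hrec in
lemma arec (L : List ℕ) (t : ℕ) (hp : IsPartition (L ++ [t])) :
    a (L ++ [t]) = a L + (t : ℤ) * a (colErase (L ++ [t])) := by
  have h := hrec (L ++ [t]) hp (by simp)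
  rwa [List.dropLast_concat, List.getLastD_concat] at h

include h0 hrec in
lemma apos : ∀ n (l : List ℕ), l.sum ≤ n → IsPartition l → 1 ≤ a l := by
  intro n
  induction n with
  | zero =>
    intro l hsum hl
    have : l = [] := by
      cases l with
      | nil => rfl
      | cons x l => exact absurd (hl.2 x (by simp)) (by simp at hsum; omega)
    simp [this, h0]
  | succ n ih =>
    intro l hsum hl
    rcases List.eq_nil_or_concat l with rfl | ⟨L, t, rfl⟩
    · simp [h0]
    rw [List.concat_eq_append] at *
    have ht : 0 < t := hl.2 t (by simp)
    have hsL : (L ++ [t]).sum = L.sum + t := by simp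
    have h1 : 1 ≤ a L := by
      apply ih L (by omega) ((List.dropLast_concat (l₁ := L) (b := t)) ▸ isPartition_dropLast hl)
    have h2 : 1 ≤ a (colErase (L ++ [t])) := by
      apply ih _ _ (isPartition_colErase hl)
      have := colErase_sum_lt (l := L ++ [t]) (by simp) hl.2
      omega
    rw [arec hrec L t hl]
    nlinarith [(by exact_mod_cast ht : (1:ℤ) ≤ (t:ℤ))]

end WithA
section WithA2
variable {a : List ℕ → ℤ} (h0 : a [] = 1)
  (hrec : ∀ l : List ℕ, IsPartition l → l ≠ [] →
      a l = a l.dropLast + (l.getLastD 0 : ℤ) * a (colErase l))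

def Rf (a : List ℕ → ℤ) (m : ℕ) : ℤ := if m = 0 then a [] else a [m]

lemma Rf_eq {m : ℕ} (hm : 1 ≤ m) : Rf a m = a [m] := by
  unfold Rf; rw [if_neg (by omega)]

include hrec in
lemma row_eq (m : ℕ) (hm : 1 ≤ m) : a [m] = a [] + (m : ℤ) * Rf a (m-1) := by
  have hp : IsPartition [m] := ⟨List.pairwise_singleton _ m, by intro x hx; simp at hx; omega⟩
  have h := arec hrec [] m (by simpa using hp)
  simp only [List.nil_append] at h
  rw [h, colErase_single]
  rcases Nat.eq_or_lt_of_le hm with h1 | h1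
  · simp [Rf, ← h1]
  · have hne : ¬ (m - 1 = 0) := by omega
    rw [if_neg (by simpa using hne)]
    rw [Rf_eq (by omega)]

include h0 hrec in
lemma Rf_succ (m : ℕ) : Rf a (m+1) = 1 + ((m:ℤ)+1) * Rf a m := by
  have h := row_eq hrec (m+1) (by omega)
  rw [Nat.add_sub_cancel, h0] at h
  rw [Rf_eq (by omega), h]
  push_cast; ring

include h0 hrec in
lemma Rf_pos (m : ℕ) : 1 ≤ Rf a m := by
  unfold Rf
  split
  · simp [h0]
  · next h =>
    exact apos h0 hrec ([m].sum) [m] le_rfl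
      ⟨List.pairwise_singleton _ m, by intro x hx; simp at hx; omega⟩

include h0 hrec in
lemma tworow : ∀ t s : ℕ, 1 ≤ t → t ≤ s → a [s, t] ≤ (1 + (t:ℤ)) * a [s] := by
  intro t
  induction t using Nat.strong_induction_on with
  | _ t ih =>
    intro s ht hts
    have hs1 : 1 ≤ s := le_trans ht hts
    have hp : IsPartition [s, t] := by
      constructor
      · exact sorted_cons_tail (List.pairwise_singleton _ t) (by intro y hy; simp at hy; omega)
      · intro x hx; simp at hx; rcases hx with rfl | rfl <;> omega
    have h := arec hrec [s] t (by simpa using hp)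
    simp only [List.cons_append, List.nil_append] at h
    have hce : colErase [s, t] = (if s - 1 = 0 then [] else [s-1]) ++ (if t - 1 = 0 then [] else [t-1]) := by
      rw [colErase_cons, colErase_single]
    have hrow := row_eq hrec s hs1
    have hRpos := Rf_pos h0 hrec (s-1)
    have haspos : 1 ≤ a [s] := by rw [← Rf_eq (a := a) hs1]; exact Rf_pos h0 hrec s
    rcases Nat.eq_or_lt_of_le ht with h1 | h1
    · -- t = 1
      subst h1
      have hce2 : a (colErase [s, 1]) = Rf a (s-1) := by
        rw [hce]
        simp only [Nat.sub_self, if_pos rfl, List.append_nil]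
        unfold Rf
        split <;> rfl
      rw [h, hce2, hrow, h0]
      push_cast
      nlinarith [(by exact_mod_cast hs1 : (1:ℤ) ≤ (s:ℤ))]
    · -- t ≥ 2, so s ≥ 2
      have ht2 : 2 ≤ t := h1
      have hs2 : 2 ≤ s := le_trans ht2 hts
      have hce2 : colErase [s, t] = [s-1, t-1] := by
        rw [hce, if_neg (by omega), if_neg (by omega)]; rfl
      have hih := ih (t-1) (by omega) (s-1) (by omega) (by omega)
      have haspos' : 1 ≤ a [s-1] := by
        rw [← Rf_eq (a := a) (show 1 ≤ s-1 by omega)]; exact Rf_pos h0 hrec (s-1)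
      rw [h, hce2]
      have hR : Rf a (s-1) = a [s-1] := Rf_eq (by omega)
      rw [hR] at hrow
      have hc1 : ((t-1:ℕ):ℤ) = (t:ℤ) - 1 := by omega
      rw [hc1] at hih
      have hts' : ((t:ℕ):ℤ) ≤ ((s:ℕ):ℤ) := by exact_mod_cast hts
      have key : (t:ℤ) * a [s-1] ≤ a [s] := by
        rw [hrow, h0]
        nlinarith
      nlinarith [(by exact_mod_cast ht2 : (2:ℤ) ≤ (t:ℤ)), key,
        mul_le_mul_of_nonneg_left hih (by positivity : (0:ℤ) ≤ ((t:ℕ):ℤ))]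

include h0 hrec in
lemma F1 (m : ℕ) (hm : 1 ≤ m) : ∀ k, a (Pt m 1 k []) = a [m] + (k:ℤ) * Rf a (m-1) := by
  intro k
  induction k with
  | zero => simp [Pt]
  | succ k ih =>
    have hsplit : Pt m 1 (k+1) [] = Pt m 1 k [] ++ [1] := by
      simp [Pt, List.replicate_succ']
    have hp : IsPartition (Pt m 1 (k+1) []) :=
      isPartition_P (by omega) hm (List.Pairwise.nil) (by simp) (by simp)
    have h := arec hrec (Pt m 1 k []) 1 (by rwa [hsplit] at hp)
    rw [← hsplit] at h
    have hce : a (colErase (Pt m 1 (k+1) [])) = Rf a (m-1) := by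
      rw [CE_P1]
      unfold Rf
      split <;> rfl
    rw [h, hce, ih]
    push_cast
    ring

end WithA2
section WithA3
variable {a : List ℕ → ℤ} (h0 : a [] = 1)
  (hrec : ∀ l : List ℕ, IsPartition l → l ≠ [] →
      a l = a l.dropLast + (l.getLastD 0 : ℤ) * a (colErase l))

def MainI (a : List ℕ → ℤ) (m q k : ℕ) (α : List ℕ) : Prop :=
  ((m : ℤ) - q + 1) * a (Pt m q k α) ≤ (k:ℤ) * a (Pt (m+1) q (k-1) ((if q = 1 then [] else [q-1]) ++ α))

def StarI (a : List ℕ → ℤ) (m q k : ℕ) : Prop :=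
  ((m : ℤ) - q + 1) * a (Pt m q (k-1) []) + (k:ℤ) * a (Pt m (q-1) (k-1) (if q = 2 then [] else [q-2]))
    ≤ (k:ℤ) * a (Pt (m+1) q (k-1) [])

lemma mul_pred (q k : ℕ) (hk : 1 ≤ k) : q * k = q * (k-1) + q := by
  have h : (k-1) + 1 = k := by omega
  calc q * k = q * ((k-1)+1) := by rw [h]
  _ = q * (k-1) + q := by ring

lemma pred_mul (q k : ℕ) (hq : 1 ≤ q) : q * k = (q-1) * k + k := by
  have h : (q-1) + 1 = q := by omega
  calc q * k = ((q-1)+1) * k := by rw [h]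
  _ = (q-1) * k + k := by ring

lemma Pt_split {m q k : ℕ} (hk : 1 ≤ k) : Pt m q k [] = Pt m q (k-1) [] ++ [q] := by
  cases k with
  | zero => omega
  | succ j => simp [Pt, List.replicate_succ']

lemma Pt_concat (m q k : ℕ) (β : List ℕ) (t : ℕ) : Pt m q k (β ++ [t]) = Pt m q k β ++ [t] := by
  simp [Pt]

lemma tail_eq1 {q : ℕ} (hq : 2 ≤ q) :
    (if q - 1 = 1 then ([] : List ℕ) else [q-1-1]) = (if q = 2 then [] else [q-2]) := by
  rcases Nat.lt_or_ge q 3 with h | h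
  · have h2 : q = 2 := by omega
    subst h2; simp
  · rw [if_neg (by omega), if_neg (by omega)]
    have : q - 1 - 1 = q - 2 := by omega
    rw [this]

lemma tail_eq2 {q : ℕ} (hq : 3 ≤ q) :
    (if q - 1 = 2 then ([] : List ℕ) else [q-1-2]) = (if q = 3 then [] else [q-3]) := by
  rcases Nat.lt_or_ge q 4 with h | h
  · have h2 : q = 3 := by omega
    subst h2; simp
  · rw [if_neg (by omega), if_neg (by omega)]
    have : q - 1 - 2 = q - 3 := by omega
    rw [this]

lemma colErase_single' {x : ℕ} (hx : 1 ≤ x) : colErase [x] = (if x = 1 then [] else [x-1]) := by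
  rw [colErase_single]
  rcases Nat.eq_or_lt_of_le hx with h | h
  · rw [if_pos (by omega), if_pos (by omega)]
  · rw [if_neg (by omega), if_neg (by omega)]

include h0 hrec in
lemma aP_pos {m q k : ℕ} {β : List ℕ} (h1 : 1 ≤ q) (h2 : q ≤ m)
    (hs : β.Pairwise (· ≥ ·)) (hp : ∀ x ∈ β, 0 < x) (hb : ∀ x ∈ β, x ≤ q) :
    1 ≤ a (Pt m q k β) :=
  apos h0 hrec _ _ le_rfl (isPartition_P h1 h2 hs hp hb)

set_option maxHeartbeats 4000000 in
include h0 hrec in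
lemma combined : ∀ n : ℕ,
    (∀ m q k (α : List ℕ), 1 ≤ q → q ≤ m → 1 ≤ k → α.Pairwise (· ≥ ·) → (∀ x ∈ α, 0 < x) →
      (∀ x ∈ α, x < q) → m + q * k + α.sum ≤ n → MainI a m q k α) ∧
    (∀ m q k, 2 ≤ q → q ≤ m → 1 ≤ k → m + 1 + q * (k-1) ≤ n → StarI a m q k) := by
  intro n
  induction n using Nat.strong_induction_on with
  | _ n ih =>
  constructor
  · -- MAIN
    intro m q k α h1q hqm h1k hαs hαp hαq hmeas
    rcases List.eq_nil_or_concat α with rfl | ⟨α', t, hα⟩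
    · -- α = []
      rcases Nat.eq_or_lt_of_le h1q with hq1 | hq2
      · -- q = 1
        subst hq1
        unfold MainI
        rw [if_pos rfl, List.nil_append]
        rw [F1 h0 hrec m (by omega) k, F1 h0 hrec (m+1) (by omega) (k-1)]
        have e1 : (m+1) - 1 = m := by omega
        rw [e1]
        have e2 : Rf a m = a [m] := Rf_eq (by omega)
        have e3 : Rf a (m+1) = a [m+1] := Rf_eq (by omega)
        have h4 : Rf a (m+1) = 1 + ((m:ℤ)+1) * Rf a m := Rf_succ h0 hrec m
        have h5 : Rf a ((m-1)+1) = 1 + (((m-1:ℕ):ℤ)+1) * Rf a (m-1) := Rf_succ h0 hrec (m-1)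
        rw [show (m-1)+1 = m from by omega] at h5
        have c1 : ((m-1:ℕ):ℤ) = (m:ℤ) - 1 := by omega
        have c2 : ((k-1:ℕ):ℤ) = (k:ℤ) - 1 := by omega
        rw [c1] at h5
        rw [c2, ← e2, ← e3, h4, h5]
        have p1 := Rf_pos h0 hrec (m-1)
        have p2 := Rf_pos h0 hrec m
        have ck : (1:ℤ) ≤ (k:ℤ) := by exact_mod_cast h1k
        have cm : (1:ℤ) ≤ (m:ℤ) := by exact_mod_cast (le_trans h1q hqm)
        have hx0 : (0:ℤ) ≤ Rf a (m-1) := by linarith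
        have hk1 : (0:ℤ) ≤ (k:ℤ) - 1 := by linarith
        have hmk : (0:ℤ) ≤ (m:ℤ) * ((m:ℤ)+(k:ℤ)) := by positivity
        push_cast
        set x := Rf a (m-1) with hxdef
        nlinarith [mul_nonneg (mul_nonneg hk1 hmk) hx0, mul_le_mul_of_nonneg_right (mul_le_mul_of_nonneg_left ck (by linarith : (0:ℤ) ≤ (m:ℤ)+(k:ℤ))) hx0]
      · -- q ≥ 2
        have hm2 : 2 ≤ m := le_trans hq2 hqm
        simp only [List.sum_nil] at hmeas
        have hsplit := Pt_split (m := m) (q := q) h1k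
        have hpl : IsPartition (Pt m q k []) :=
          isPartition_P (by omega) hqm List.Pairwise.nil (by simp) (by simp)
        have eql : a (Pt m q k []) = a (Pt m q (k-1) []) + (q:ℤ) * a (Pt (m-1) (q-1) k []) := by
          have h := arec hrec (Pt m q (k-1) []) q (by rwa [hsplit] at hpl)
          rw [← hsplit] at h
          rw [h, CE_P hm2 hq2, colErase_nil]
        have hmusplit : Pt (m+1) q (k-1) [q-1] = Pt (m+1) q (k-1) [] ++ [q-1] := by
          simp [Pt]
        have hpmu : IsPartition (Pt (m+1) q (k-1) [q-1]) :=
          isPartition_P (by omega) (by omega) (List.pairwise_singleton _ _)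
            (by intro x hx; simp at hx; omega) (by intro x hx; simp at hx; omega)
        have eqmu : a (Pt (m+1) q (k-1) [q-1]) = a (Pt (m+1) q (k-1) [])
            + ((q:ℤ)-1) * a (Pt m (q-1) (k-1) (if q = 2 then [] else [q-2])) := by
          have h := arec hrec (Pt (m+1) q (k-1) []) (q-1) (by rwa [hmusplit] at hpmu)
          rw [← hmusplit] at h
          rw [h, CE_P (by omega) hq2, Nat.add_sub_cancel,
            colErase_single' (show 1 ≤ q - 1 by omega), tail_eq1 hq2]
          have : ((q-1:ℕ):ℤ) = (q:ℤ) - 1 := by omega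
          rw [this]
        have e1 := mul_pred q k h1k
        have e2 := pred_mul q k (by omega)
        have hstar := (ih (n-1) (by omega)).2 m q k hq2 hqm h1k (by omega)
        have hmain := (ih (n-1) (by omega)).1 (m-1) (q-1) k [] (by omega) (by omega) h1k
          List.Pairwise.nil (by simp) (by simp) (by simp; omega)
        unfold MainI at hmain ⊢
        unfold StarI at hstar
        rw [show (m-1)+1 = m from by omega, List.append_nil, tail_eq1 hq2] at hmain
        have c1 : ((m-1:ℕ):ℤ) = (m:ℤ) - 1 := by omega
        have c2 : ((q-1:ℕ):ℤ) = (q:ℤ) - 1 := by omega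
        rw [c1, c2] at hmain
        rw [if_neg (show ¬ q = 1 by omega), List.append_nil]
        rw [eql, eqmu]
        have hq0 : (0:ℤ) ≤ (q:ℤ) := by positivity
        have h6 := mul_le_mul_of_nonneg_left hmain hq0
        nlinarith [hstar, h6]
    · -- α = α' ++ [t]
      rw [List.concat_eq_append] at hα
      subst hα
      have ht1 : 1 ≤ t := hαp t (by simp)
      have htq : t < q := hαq t (by simp)
      have hq2 : 2 ≤ q := by omega
      have hm2 : 2 ≤ m := by omega
      have hpα : IsPartition (α' ++ [t]) := ⟨hαs, hαp⟩
      have hβpart := isPartition_colErase hpα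
      have hβq : ∀ x ∈ colErase (α' ++ [t]), x < q - 1 := by
        intro x hx
        have hne := List.of_mem_filter hx
        have hx' := List.mem_of_mem_filter hx
        obtain ⟨y, hy, rfl⟩ := List.mem_map.1 hx'
        have := hαq y hy
        simp at hne
        omega
      -- λ recurrence
      have hpl : IsPartition (Pt m q k (α' ++ [t])) :=
        isPartition_P (by omega) hqm hαs hαp (fun x hx => le_of_lt (hαq x hx))
      have eql : a (Pt m q k (α' ++ [t])) = a (Pt m q k α')
          + (t:ℤ) * a (Pt (m-1) (q-1) k (colErase (α' ++ [t]))) := by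
        have h := arec hrec (Pt m q k α') t (by rwa [Pt_concat] at hpl)
        rw [← Pt_concat] at h
        rw [h, CE_P hm2 hq2]
      -- μ recurrence
      have hμtail_sorted : (((q-1) :: (α' ++ [t])) : List ℕ).Pairwise (· ≥ ·) :=
        sorted_cons_tail hαs (by intro y hy; have := hαq y hy; omega)
      have hpmu : IsPartition (Pt (m+1) q (k-1) ((q-1) :: (α' ++ [t]))) := by
        refine isPartition_P (by omega) (by omega) hμtail_sorted ?_ ?_
        · intro x hx
          rcases List.mem_cons.1 hx with rfl | hx
          · omega
          · exact hαp x hx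
        · intro x hx
          rcases List.mem_cons.1 hx with rfl | hx
          · omega
          · exact le_of_lt (hαq x hx)
      have hmusplit : Pt (m+1) q (k-1) ((q-1) :: (α' ++ [t]))
          = Pt (m+1) q (k-1) ((q-1) :: α') ++ [t] := by
        simp [Pt]
      have eqmu : a (Pt (m+1) q (k-1) ((q-1) :: (α' ++ [t]))) = a (Pt (m+1) q (k-1) ((q-1) :: α'))
          + (t:ℤ) * a (Pt m (q-1) (k-1) ((if q - 1 = 1 then [] else [q-1-1]) ++ colErase (α' ++ [t]))) := by
        have h := arec hrec (Pt (m+1) q (k-1) ((q-1) :: α')) t (by rwa [hmusplit] at hpmu)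
        rw [← hmusplit] at h
        rw [h, CE_P (by omega) hq2, Nat.add_sub_cancel]
        rw [show ((q-1) :: (α' ++ [t])) = [q-1] ++ (α' ++ [t]) from rfl, colErase_append,
          colErase_single' (show 1 ≤ q - 1 by omega)]
      -- IHs
      have hα's : α'.Pairwise (· ≥ ·) :=
        List.Pairwise.sublist (List.sublist_append_left α' [t]) hαs
      have hsum : (α' ++ [t]).sum = α'.sum + t := by simp
      have hβsum := colErase_sum_le (α' ++ [t])
      have ih1 := (ih (n-1) (by omega)).1 m q k α' h1q hqm h1k hα's
        (fun x hx => hαp x (by simp [hx])) (fun x hx => hαq x (by simp [hx])) (by omega)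
      have e2 := pred_mul q k (by omega)
      have ih2 := (ih (n-1) (by omega)).1 (m-1) (q-1) k (colErase (α' ++ [t])) (by omega) (by omega)
        h1k hβpart.1 hβpart.2 hβq (by omega)
      unfold MainI at ih1 ih2 ⊢
      rw [if_neg (show ¬ q = 1 by omega)] at ih1 ⊢
      rw [show (m-1)+1 = m from by omega] at ih2
      have c1 : ((m-1:ℕ):ℤ) = (m:ℤ) - 1 := by omega
      have c2 : ((q-1:ℕ):ℤ) = (q:ℤ) - 1 := by omega
      rw [c1, c2] at ih2
      rw [show ([q-1] ++ (α' ++ [t]) : List ℕ) = (q-1) :: (α' ++ [t]) from rfl]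
      rw [show ([q-1] ++ α' : List ℕ) = (q-1) :: α' from rfl] at ih1
      rw [eql, eqmu]
      have ht0 : (0:ℤ) ≤ (t:ℤ) := by positivity
      have h6 := mul_le_mul_of_nonneg_left ih2 ht0
      nlinarith [ih1, h6]
  · -- STAR
    intro m q k h2q hqm h1k hmeas
    rcases Nat.lt_or_ge k 2 with hk1 | hk2
    · -- k = 1
      have hk : k = 1 := by omega
      subst hk
      have hm1 : 1 ≤ m := by omega
      unfold StarI
      simp only [Nat.sub_self]
      rw [show (Pt m q 0 [] : List ℕ) = [m] from by simp [Pt],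
        show (Pt (m+1) q 0 [] : List ℕ) = [m+1] from by simp [Pt]]
      have hrow : a [m+1] = 1 + ((m:ℤ)+1) * a [m] := by
        have h := row_eq hrec (m+1) (by omega)
        rw [Nat.add_sub_cancel, h0, Rf_eq hm1] at h
        exact h
      have hpa : 1 ≤ a [m] := by rw [← Rf_eq (a := a) hm1]; exact Rf_pos h0 hrec m
      have cm : ((q:ℕ):ℤ) ≤ ((m:ℕ):ℤ) := by exact_mod_cast hqm
      rcases Nat.eq_or_lt_of_le h2q with hq2 | hq3
      · rw [if_pos (by omega), show (Pt m (q-1) 0 [] : List ℕ) = [m] from by simp [Pt]]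
        rw [hrow]
        have : (q:ℤ) = 2 := by exact_mod_cast hq2.symm
        rw [this]
        push_cast
        ring_nf
        nlinarith
      · rw [if_neg (by omega), show (Pt m (q-1) 0 [q-2] : List ℕ) = [m, q-2] from by simp [Pt]]
        have htw := tworow h0 hrec (q-2) m (by omega) (by omega)
        have c3 : ((q-2:ℕ):ℤ) = (q:ℤ) - 2 := by omega
        rw [c3] at htw
        rw [hrow]
        push_cast
        nlinarith
    · rcases Nat.lt_or_ge q 3 with hq2 | hq3
      · -- q = 2, k ≥ 2
        have hq : q = 2 := by omega
        subst hq
        have hm2 : 2 ≤ m := hqm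
        have hk11 : 1 ≤ k - 1 := by omega
        have ek : k - 1 - 1 = k - 2 := by omega
        unfold StarI
        rw [if_pos rfl]
        -- A split
        have hpA : IsPartition (Pt m 2 (k-1) []) :=
          isPartition_P (by omega) hm2 List.Pairwise.nil (by simp) (by simp)
        have eqA : a (Pt m 2 (k-1) []) = a (Pt m 2 (k-2) []) + 2 * a (Pt (m-1) 1 (k-1) []) := by
          have hsp := Pt_split (m := m) (q := 2) hk11
          rw [ek] at hsp
          have h := arec hrec (Pt m 2 (k-2) []) 2 (by rwa [hsp] at hpA)
          rw [← hsp] at h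
          rw [h, CE_P hm2 (by omega), colErase_nil]
          norm_num
        have hpB : IsPartition (Pt (m+1) 2 (k-1) []) :=
          isPartition_P (by omega) (by omega) List.Pairwise.nil (by simp) (by simp)
        have eqB : a (Pt (m+1) 2 (k-1) []) = a (Pt (m+1) 2 (k-2) []) + 2 * a (Pt m 1 (k-1) []) := by
          have hsp := Pt_split (m := m+1) (q := 2) hk11
          rw [ek] at hsp
          have h := arec hrec (Pt (m+1) 2 (k-2) []) 2 (by rwa [hsp] at hpB)
          rw [← hsp] at h
          rw [h, CE_P (by omega) (by omega), colErase_nil, Nat.add_sub_cancel]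
          norm_num
        -- F1 relations
        have f1 : a (Pt m 1 (k-1) []) = a [m] + ((k-1:ℕ):ℤ) * Rf a (m-1) := F1 h0 hrec m (by omega) (k-1)
        have f2 : a (Pt m 1 (k-2) []) = a [m] + ((k-2:ℕ):ℤ) * Rf a (m-1) := F1 h0 hrec m (by omega) (k-2)
        -- IHs
        have e1 := mul_pred 2 (k-1) hk11
        have hstar' := (ih (n-1) (by omega)).2 m 2 (k-1) (by omega) hm2 hk11 (by omega)
        have hmain' := (ih (n-1) (by omega)).1 (m-1) 1 (k-1) [] (by omega) (by omega) hk11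
          List.Pairwise.nil (by simp) (by simp) (by simp; omega)
        unfold StarI at hstar'
        unfold MainI at hmain'
        rw [if_pos rfl, ek] at hstar'
        rw [if_pos rfl, List.nil_append, show (m-1)+1 = m from by omega, ek] at hmain'
        have c1 : ((m-1:ℕ):ℤ) = (m:ℤ) - 1 := by omega
        have c2 : ((k-1:ℕ):ℤ) = (k:ℤ) - 1 := by omega
        have c3 : ((k-2:ℕ):ℤ) = (k:ℤ) - 2 := by omega
        rw [c1] at hmain'
        rw [c2] at hstar' hmain' f1
        rw [c3] at f2
        -- positivity
        have hB1 : 1 ≤ a (Pt (m+1) 2 (k-2) []) :=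
          aP_pos h0 hrec (by omega) (by omega) List.Pairwise.nil (by simp) (by simp)
        have hB2 : 1 ≤ a (Pt m 1 (k-1) []) :=
          aP_pos h0 hrec (by omega) (by omega) List.Pairwise.nil (by simp) (by simp)
        have hR := Rf_pos h0 hrec (m-1)
        have ck : (2:ℤ) ≤ (k:ℤ) := by exact_mod_cast hk2
        have h3' : 0 ≤ ((k:ℤ)-1) * (a (Pt m 1 (k-1) []) - a (Pt m 1 (k-2) [])) := by
          rw [f1, f2]
          have : a [m] + ((k:ℤ)-1) * Rf a (m-1) - (a [m] + ((k:ℤ)-2) * Rf a (m-1)) = Rf a (m-1) := by ring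
          rw [this]
          nlinarith
        push_cast at hmain' hstar'
        have hmain2 := mul_le_mul_of_nonneg_left hmain' (by norm_num : (0:ℤ) ≤ 2)
        rw [eqA, eqB]
        push_cast
        linarith [hstar', hmain2, h3', hB1, hB2]
      · -- q ≥ 3, k ≥ 2
        have hm3 : 3 ≤ m := le_trans hq3 hqm
        have hk11 : 1 ≤ k - 1 := by omega
        have ek : k - 1 - 1 = k - 2 := by omega
        unfold StarI
        rw [if_neg (show ¬ q = 2 by omega)]
        have tail3 : (if q - 2 = 1 then ([] : List ℕ) else [q-2-1]) = (if q = 3 then [] else [q-3]) := by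
          rcases Nat.lt_or_ge q 4 with h | h
          · have h3 : q = 3 := by omega
            subst h3; simp
          · rw [if_neg (by omega), if_neg (by omega)]
            have : q - 2 - 1 = q - 3 := by omega
            rw [this]
        -- A split
        have hpA : IsPartition (Pt m q (k-1) []) :=
          isPartition_P (by omega) hqm List.Pairwise.nil (by simp) (by simp)
        have eqA : a (Pt m q (k-1) []) = a (Pt m q (k-2) []) + (q:ℤ) * a (Pt (m-1) (q-1) (k-1) []) := by
          have hsp := Pt_split (m := m) (q := q) hk11
          rw [ek] at hsp
          have h := arec hrec (Pt m q (k-2) []) q (by rwa [hsp] at hpA)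
          rw [← hsp] at h
          rw [h, CE_P (by omega) (by omega), colErase_nil]
        have hpB : IsPartition (Pt (m+1) q (k-1) []) :=
          isPartition_P (by omega) (by omega) List.Pairwise.nil (by simp) (by simp)
        have eqB : a (Pt (m+1) q (k-1) []) = a (Pt (m+1) q (k-2) []) + (q:ℤ) * a (Pt m (q-1) (k-1) []) := by
          have hsp := Pt_split (m := m+1) (q := q) hk11
          rw [ek] at hsp
          have h := arec hrec (Pt (m+1) q (k-2) []) q (by rwa [hsp] at hpB)
          rw [← hsp] at h
          rw [h, CE_P (by omega) (by omega), colErase_nil, Nat.add_sub_cancel]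
        -- C split
        have hpC : IsPartition (Pt m (q-1) (k-1) [q-2]) :=
          isPartition_P (by omega) (by omega) (List.pairwise_singleton _ _)
            (by intro x hx; simp at hx; omega) (by intro x hx; simp at hx; omega)
        have hCsp : Pt m (q-1) (k-1) [q-2] = Pt m (q-1) (k-1) [] ++ [q-2] := by simp [Pt]
        have eqC : a (Pt m (q-1) (k-1) [q-2]) = a (Pt m (q-1) (k-1) [])
            + ((q:ℤ)-2) * a (Pt (m-1) (q-2) (k-1) (if q = 3 then [] else [q-3])) := by
          have h := arec hrec (Pt m (q-1) (k-1) []) (q-2) (by rwa [hCsp] at hpC)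
          rw [← hCsp] at h
          rw [h, CE_P (by omega) (by omega), colErase_single' (show 1 ≤ q - 2 by omega),
            show (q-1)-1 = q-2 from by omega, tail3]
          have : ((q-2:ℕ):ℤ) = (q:ℤ) - 2 := by omega
          rw [this]
        -- IHs
        have em1 := pred_mul q (k-1) (by omega)
        have em2 := mul_pred q (k-1) hk11
        have ihs1 := (ih (n-1) (by omega)).2 (m-1) (q-1) k (by omega) (by omega) h1k (by omega)
        have ihs2 := (ih (n-1) (by omega)).2 m q (k-1) (by omega) hqm hk11 (by omega)
        have ihm := (ih (n-1) (by omega)).1 (m-1) (q-1) (k-1) [] (by omega) (by omega) hk11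
          List.Pairwise.nil (by simp) (by simp) (by simp; omega)
        unfold StarI at ihs1 ihs2
        unfold MainI at ihm
        rw [show (m-1)+1 = m from by omega, show (q-1)-1 = q-2 from by omega,
          tail_eq2 hq3] at ihs1
        rw [if_neg (show ¬ q = 2 by omega), ek] at ihs2
        rw [if_neg (show ¬ q - 1 = 1 by omega), List.append_nil,
          show (m-1)+1 = m from by omega, show (q-1)-1 = q-2 from by omega, ek] at ihm
        have c1 : ((m-1:ℕ):ℤ) = (m:ℤ) - 1 := by omega
        have c2 : ((q-1:ℕ):ℤ) = (q:ℤ) - 1 := by omega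
        have c3 : ((k-1:ℕ):ℤ) = (k:ℤ) - 1 := by omega
        rw [c1, c2] at ihs1
        rw [c1, c2] at ihm
        rw [c3] at ihs2 ihm
        -- positivity
        have hB1 : 1 ≤ a (Pt (m+1) q (k-2) []) :=
          aP_pos h0 hrec (by omega) (by omega) List.Pairwise.nil (by simp) (by simp)
        have hC2 : 1 ≤ a (Pt (m-1) (q-2) (k-1) (if q = 3 then [] else [q-3])) := by
          rcases Nat.eq_or_lt_of_le hq3 with h3 | h4
          · rw [if_pos (by omega)]
            exact aP_pos h0 hrec (by omega) (by omega) List.Pairwise.nil (by simp) (by simp)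
          · rw [if_neg (by omega)]
            exact aP_pos h0 hrec (by omega) (by omega) (List.pairwise_singleton _ _)
              (by intro x hx; simp at hx; omega) (by intro x hx; simp at hx; omega)
        have ck : (2:ℤ) ≤ (k:ℤ) := by exact_mod_cast hk2
        have cq : (3:ℤ) ≤ (q:ℤ) := by exact_mod_cast hq3
        have h6 := mul_le_mul_of_nonneg_left ihs1 (by linarith : (0:ℤ) ≤ (q:ℤ) - 1)
        have h7 : 0 ≤ (k:ℤ) * a (Pt (m-1) (q-2) (k-1) (if q = 3 then [] else [q-3])) := by
          apply mul_nonneg (by positivity) (by linarith)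
        push_cast at ihs1 ihs2 ihm h6 h7
        rw [eqA, eqB, eqC]
        push_cast
        linarith [ihs2, ihm, h6, h7, hB1]

end WithA3
end Aux18

theorem stmt_18 (a : List ℕ → ℤ) (h0 : a [] = 1)
    (hrec : ∀ l : List ℕ, IsPartition l → l ≠ [] →
      a l = a l.dropLast + (l.getLastD 0 : ℤ) * a (colErase l))
    (m q k : ℕ) (α : List ℕ) (hq : 1 ≤ q) (hmq : q ≤ m) (hk : 1 ≤ k)
    (hα : α.Pairwise (· ≥ ·)) (hαpos : ∀ x ∈ α, 0 < x) (hαq : ∀ x ∈ α, x < q) :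
    ((m : ℤ) - q + 1) * a (m :: (List.replicate k q ++ α)) ≤
      k * a ((m + 1) ::
        (List.replicate (k - 1) q ++ (if q = 1 then [] else [q - 1]) ++ α)) := by
  have h := (Aux18.combined h0 hrec (m + q * k + α.sum)).1 m q k α hq hmq hk hα hαpos hαq le_rfl
  unfold Aux18.MainI Aux18.Pt at h
  rw [← List.append_assoc] at h
  exact h
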